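/- (Final inequality in the proof of Proposition 3.6.) Assume H ∈ C²(𝕏, ℝ), 𝕐 := H_x(𝕏) is open, H_x : 𝕏 → 𝕐 is a C¹-diffeomorphism, S(x) = eᵀx with e ∈ ℝⁿ \ {0}, and V := ⋂_{k=1}^N (J_k e)^⊥ satisfies V ∩ 𝕐 ≠ ∅. Then 𝒯 = H_x⁻¹(V ∩ 𝕐), and for every compact set K ⊆ 𝕏 there exists c > 0 such that for all x ∈ K: dist(x, 𝒯) ≤ c · Σ_{k=1}^N |{S,H}_{J_k}(x)| = c · Σ_{k=1}^N |H_x(x)ᵀ J_k e|. -/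

import Mathlib

open Set Matrix Metric

/-- Matrix–vector multiplication on Euclidean space. -/
noncomputable def mv {a b : ℕ} (A : Matrix (Fin a) (Fin b) ℝ)
    (x : EuclideanSpace ℝ (Fin b)) : EuclideanSpace ℝ (Fin a) :=
  Matrix.toEuclideanLin A x

lemma inner_mv_eq_dot {n : ℕ} (A : Matrix (Fin n) (Fin n) ℝ)
    (u w : EuclideanSpace ℝ (Fin n)) :
    (inner ℝ u (mv A w) : ℝ) = u ⬝ᵥ (A *ᵥ w) := by
  simp only [mv, Matrix.toEuclideanLin_apply, PiLp.inner_apply, RCLike.inner_apply,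
    conj_trivial, dotProduct]
  exact Finset.sum_congr rfl fun i _ => mul_comm _ _

lemma inner_mv_skew {n : ℕ} (A : Matrix (Fin n) (Fin n) ℝ) (hA : Aᵀ = -A)
    (u w : EuclideanSpace ℝ (Fin n)) :
    (inner ℝ u (mv A w) : ℝ) = -(inner ℝ w (mv A u) : ℝ) := by
  rw [inner_mv_eq_dot, inner_mv_eq_dot, dotProduct_mulVec,
    ← Matrix.mulVec_transpose, hA]
  simp [Matrix.neg_mulVec, dotProduct_comm]

lemma mem_span_orthogonal_iff {n N : ℕ} (v : Fin N → EuclideanSpace ℝ (Fin n))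
    (y : EuclideanSpace ℝ (Fin n)) :
    y ∈ (Submodule.span ℝ (Set.range v))ᗮ ↔ ∀ k, (inner ℝ y (v k) : ℝ) = 0 := by
  constructor
  · intro h k
    rw [real_inner_comm]
    exact h (v k) (Submodule.subset_span (Set.mem_range_self k))
  · intro h u hu
    induction hu using Submodule.span_induction with
    | mem x hx =>
      obtain ⟨k, rfl⟩ := hx
      rw [real_inner_comm]; exact h k
    | zero => simp
    | add x z hx hz ihx ihz => rw [inner_add_left, ihx, ihz]; ring
    | smul a x hx ihx => rw [inner_smul_left, ihx]; simp

/-- Norm bound on the span of the family `v`. -/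
lemma span_norm_bound {n N : ℕ} (v : Fin N → EuclideanSpace ℝ (Fin n)) :
    ∃ C > (0:ℝ), ∀ w ∈ Submodule.span ℝ (Set.range v),
      ‖w‖ ≤ C * ∑ k, |(inner ℝ w (v k) : ℝ)| := by
  set Ws := Submodule.span ℝ (Set.range v) with hWs
  by_cases hbot : Ws = ⊥
  · refine ⟨1, one_pos, fun w hw => ?_⟩
    rw [hbot, Submodule.mem_bot] at hw
    subst hw
    simp only [norm_zero, one_mul]
    exact Finset.sum_nonneg fun k _ => abs_nonneg _
  · obtain ⟨w0, hw0, hw0ne⟩ := Submodule.exists_mem_ne_zero_of_ne_bot hbot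
    have hφcont : Continuous fun w : EuclideanSpace ℝ (Fin n) =>
        ∑ k, |(inner ℝ w (v k) : ℝ)| := by
      apply continuous_finset_sum
      intro k _
      exact continuous_abs.comp (continuous_id.inner continuous_const)
    have hclosed : IsClosed (Ws : Set (EuclideanSpace ℝ (Fin n))) :=
      Ws.closed_of_finiteDimensional
    have hcpt : IsCompact ((Ws : Set (EuclideanSpace ℝ (Fin n))) ∩ sphere 0 1) :=
      (isCompact_sphere (0 : EuclideanSpace ℝ (Fin n)) 1).inter_left hclosed
    have hne : ((Ws : Set (EuclideanSpace ℝ (Fin n))) ∩ sphere 0 1).Nonempty := by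
      exact ⟨‖w0‖⁻¹ • w0, Ws.smul_mem _ hw0,
        mem_sphere_zero_iff_norm.mpr (norm_smul_inv_norm hw0ne)⟩
    obtain ⟨wm, hwm, hmin⟩ := hcpt.exists_isMinOn hne hφcont.continuousOn
    set m := ∑ k, |(inner ℝ wm (v k) : ℝ)| with hm
    have hm0 : 0 ≤ m := Finset.sum_nonneg fun k _ => abs_nonneg _
    have hmpos : 0 < m := by
      rcases hm0.lt_or_eq with h | h
      · exact h
      · exfalso
        have hall : ∀ k, (inner ℝ wm (v k) : ℝ) = 0 := by
          intro k
          have := (Finset.sum_eq_zero_iff_of_nonneg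
            (fun k _ => abs_nonneg (α := ℝ) _)).mp h.symm k (Finset.mem_univ k)
          exact abs_eq_zero.mp this
        have hperp : wm ∈ Wsᗮ := (mem_span_orthogonal_iff v wm).mpr hall
        have hz : wm = 0 :=
          (Submodule.disjoint_def.mp (Submodule.orthogonal_disjoint Ws)) wm hwm.1 hperp
        have h1 : ‖wm‖ = 1 := by simpa using hwm.2
        rw [hz, norm_zero] at h1
        exact zero_ne_one h1
    refine ⟨1 / m, by positivity, fun w hw => ?_⟩
    by_cases hwz : w = 0
    · subst hwz
      simp only [norm_zero]
      positivity
    · have hnw : (0:ℝ) < ‖w‖ := norm_pos_iff.mpr hwz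
      have husphere : ‖w‖⁻¹ • w ∈ (Ws : Set (EuclideanSpace ℝ (Fin n))) ∩ sphere 0 1 := by
        exact ⟨Ws.smul_mem _ hw, mem_sphere_zero_iff_norm.mpr (norm_smul_inv_norm hwz)⟩
      have hkey : m ≤ ∑ k, |(inner ℝ (‖w‖⁻¹ • w) (v k) : ℝ)| := hmin husphere
      have hhom : ∑ k, |(inner ℝ (‖w‖⁻¹ • w) (v k) : ℝ)|
          = ‖w‖⁻¹ * ∑ k, |(inner ℝ w (v k) : ℝ)| := by
        rw [Finset.mul_sum]
        congr 1
        ext k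
        rw [real_inner_smul_left, abs_mul, abs_inv, abs_norm]
      rw [hhom] at hkey
      rw [one_div_mul_eq_div, le_div_iff₀ hmpos]
      calc ‖w‖ * m ≤ ‖w‖ * (‖w‖⁻¹ * ∑ k, |(inner ℝ w (v k) : ℝ)|) :=
            mul_le_mul_of_nonneg_left hkey hnw.le
        _ = ∑ k, |(inner ℝ w (v k) : ℝ)| := by
            rw [← mul_assoc, mul_inv_cancel₀ hnw.ne', one_mul]

/-- Distance to the orthogonal complement of the span is controlled by the inner
products with the generators. -/
lemma infDist_orthogonal_le {n N : ℕ} (v : Fin N → EuclideanSpace ℝ (Fin n)) :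
    ∃ C > (0:ℝ), ∀ y : EuclideanSpace ℝ (Fin n),
      infDist y ((Submodule.span ℝ (Set.range v))ᗮ : Set (EuclideanSpace ℝ (Fin n)))
        ≤ C * ∑ k, |(inner ℝ y (v k) : ℝ)| := by
  obtain ⟨C, hC, hbound⟩ := span_norm_bound v
  refine ⟨C, hC, fun y => ?_⟩
  set Ws := Submodule.span ℝ (Set.range v) with hWs
  set P : EuclideanSpace ℝ (Fin n) := (Wsᗮ.orthogonalProjection y : EuclideanSpace ℝ (Fin n))
    with hP
  have hPd : y - P ∈ Wsᗮᗮ := Submodule.sub_starProjection_mem_orthogonal (K := Wsᗮ) y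
  have horth : Wsᗮᗮ = Ws := Submodule.orthogonal_orthogonal Ws
  have hPdW : y - P ∈ Ws := horth ▸ hPd
  have hPker : ∀ k, (inner ℝ P (v k) : ℝ) = 0 := by
    intro k
    rw [real_inner_comm]
    exact (Wsᗮ.orthogonalProjection y).2 (v k)
      (Submodule.subset_span (Set.mem_range_self k))
  have hsame : ∀ k, (inner ℝ (y - P) (v k) : ℝ) = (inner ℝ y (v k) : ℝ) := by
    intro k
    rw [inner_sub_left, hPker k, sub_zero]
  have h1 : infDist y (Wsᗮ : Set (EuclideanSpace ℝ (Fin n))) ≤ dist y P :=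
    infDist_le_dist_of_mem (Wsᗮ.orthogonalProjection y).2
  have h2 : dist y P = ‖y - P‖ := dist_eq_norm y P
  calc infDist y (Wsᗮ : Set (EuclideanSpace ℝ (Fin n))) ≤ ‖y - P‖ := h2 ▸ h1
    _ ≤ C * ∑ k, |(inner ℝ (y - P) (v k) : ℝ)| := hbound _ hPdW
    _ = C * ∑ k, |(inner ℝ y (v k) : ℝ)| := by
        congr 1; exact Finset.sum_congr rfl fun k _ => by rw [hsame k]

/-- Final inequality in the proof of Proposition 3.6: with `H_x : 𝕏 → 𝕐` a
C¹-diffeomorphism, `S(x) = eᵀx`, `e ≠ 0`, and `V = ⋂_k (J_k e)^⊥` meeting `𝕐`, one has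
`𝒯 = H_x⁻¹(V ∩ 𝕐)` and, on every compact `K ⊆ 𝕏`,
`dist(x,𝒯) ≤ c Σ_k |{S,H}_{J_k}(x)| = c Σ_k |H_x(x)ᵀ J_k e|`. -/
theorem dist_to_equilibria_le_sum_abs_brackets
    (n N : ℕ)
    (X : Set (EuclideanSpace ℝ (Fin n))) (hXopen : IsOpen X)
    (H : EuclideanSpace ℝ (Fin n) → ℝ)
    (Hx : EuclideanSpace ℝ (Fin n) → EuclideanSpace ℝ (Fin n))
    (Hxx : EuclideanSpace ℝ (Fin n) → Matrix (Fin n) (Fin n) ℝ)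
    (hH : ∀ p ∈ X, HasGradientAt H (Hx p) p)
    (hHx : ∀ p ∈ X,
      HasFDerivAt Hx (LinearMap.toContinuousLinearMap (Matrix.toEuclideanLin (Hxx p))) p)
    (hHxxcont : ContinuousOn Hxx X)
    -- 𝕐 = H_x(𝕏) is open and H_x : 𝕏 → 𝕐 is a C¹-diffeomorphism with inverse Hinv
    (hYopen : IsOpen (Hx '' X))
    (Hinv : EuclideanSpace ℝ (Fin n) → EuclideanSpace ℝ (Fin n))
    (hHinvmaps : ∀ y ∈ Hx '' X, Hinv y ∈ X)
    (hHinvleft : ∀ p ∈ X, Hinv (Hx p) = p)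
    (hHinvC1 : ContDiffOn ℝ 1 Hinv (Hx '' X))
    -- entropy S(x) = eᵀ x, e ≠ 0
    (e : EuclideanSpace ℝ (Fin n)) (he : e ≠ 0)
    -- skew-symmetric structure matrices
    (J : Fin N → Matrix (Fin n) (Fin n) ℝ)
    (hJskew : ∀ k, (J k)ᵀ = -(J k))
    -- V = ⋂_k (J_k e)^⊥ meets 𝕐
    (V : Set (EuclideanSpace ℝ (Fin n)))
    (hV : V = {y : EuclideanSpace ℝ (Fin n) | ∀ k, (inner ℝ y (mv (J k) e) : ℝ) = 0})
    (hVY : (V ∩ (Hx '' X)).Nonempty)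
    -- the set of thermodynamic equilibria
    (T : Set (EuclideanSpace ℝ (Fin n)))
    (hT : T = {p ∈ X | ∀ k, (inner ℝ e (mv (J k) (Hx p)) : ℝ) = 0}) :
    -- 𝒯 = H_x⁻¹(V ∩ 𝕐)
    T = Hx ⁻¹' (V ∩ (Hx '' X)) ∩ X
    -- dist(x,𝒯) ≤ c Σ_k |{S,H}_{J_k}(x)| = c Σ_k |H_x(x)ᵀ J_k e| on compacts
    ∧ ∀ K ⊆ X, IsCompact K → ∃ c > (0:ℝ), ∀ x ∈ K,
        infDist x T ≤ c * ∑ k, |(inner ℝ e (mv (J k) (Hx x)) : ℝ)|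
        ∧ c * ∑ k, |(inner ℝ e (mv (J k) (Hx x)) : ℝ)|
            = c * ∑ k, |(inner ℝ (Hx x) (mv (J k) e) : ℝ)| := by
  classical
  let E := EuclideanSpace ℝ (Fin n)
  set v : Fin N → EuclideanSpace ℝ (Fin n) := fun k => mv (J k) e with hv
  -- `⟪e, J_k y⟫ = -⟪y, J_k e⟫`
  have hbracket : ∀ (k : Fin N) (y : E),
      (inner ℝ e (mv (J k) y) : ℝ) = -(inner ℝ y (mv (J k) e) : ℝ) :=
    fun k y => inner_mv_skew (J k) (hJskew k) e y
  have habs : ∀ (k : Fin N) (y : E),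
      |(inner ℝ e (mv (J k) y) : ℝ)| = |(inner ℝ y (v k) : ℝ)| := by
    intro k y; rw [hbracket k y, abs_neg]
  -- the subspace picture
  set Vs : Submodule ℝ E := (Submodule.span ℝ (Set.range v))ᗮ with hVs
  have hVeq : V = (Vs : Set E) := by
    rw [hV]
    ext y
    simp only [mem_setOf_eq, SetLike.mem_coe, hVs]
    exact (mem_span_orthogonal_iff v y).symm
  have hHxCont : ContinuousOn Hx X := fun p hp =>
    ((hHx p hp).continuousAt).continuousWithinAt
  -- right inverse property
  have hright : ∀ y ∈ Hx '' X, Hx (Hinv y) = y := by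
    rintro y ⟨p, hp, rfl⟩
    rw [hHinvleft p hp]
  -- part 1
  have hpart1 : T = Hx ⁻¹' (V ∩ (Hx '' X)) ∩ X := by
    rw [hT, hVeq]
    ext p
    simp only [mem_setOf_eq, mem_inter_iff, mem_preimage, SetLike.mem_coe]
    constructor
    · rintro ⟨hpX, hk⟩
      refine ⟨⟨?_, mem_image_of_mem _ hpX⟩, hpX⟩
      refine (mem_span_orthogonal_iff v (Hx p)).mpr fun k => ?_
      have := hk k
      rw [hbracket k (Hx p)] at this
      linarith
    · rintro ⟨⟨hVmem, _⟩, hpX⟩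
      refine ⟨hpX, fun k => ?_⟩
      rw [hbracket k (Hx p)]
      have := (mem_span_orthogonal_iff v (Hx p)).mp hVmem k
      simp only [neg_eq_zero]; exact this
  refine ⟨hpart1, ?_⟩
  intro K hKX hK
  -- trivial case of empty K
  rcases K.eq_empty_or_nonempty with rfl | hKne
  · exact ⟨1, one_pos, fun x hx => absurd hx (notMem_empty x)⟩
  -- distance-to-Vs constant
  obtain ⟨C, hC, hCbound⟩ := infDist_orthogonal_le v
  -- compactness setup
  have hK1 : IsCompact (Hx '' K) := hK.image_of_continuousOn (hHxCont.mono hKX)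
  have hK1Y : Hx '' K ⊆ Hx '' X := image_mono hKX
  obtain ⟨r, hr, hrsub⟩ := hK1.exists_cthickening_subset_open hYopen hK1Y
  have hK2 : IsCompact (cthickening r (Hx '' K)) := hK1.cthickening
  -- bound on the derivative of Hinv
  have hfderivCont : ContinuousOn (fderiv ℝ Hinv) (Hx '' X) :=
    hHinvC1.continuousOn_fderiv_of_isOpen hYopen le_rfl
  obtain ⟨M0, hM0⟩ := hK2.exists_bound_of_continuousOn (hfderivCont.mono hrsub)
  set M : ℝ := max M0 1 with hM
  have hM1 : (0:ℝ) < M := lt_of_lt_of_le one_pos (le_max_right _ _)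
  -- bound on infDist to T over K
  obtain ⟨D0, hD0⟩ := hK.exists_bound_of_continuousOn
    ((continuous_infDist_pt T).continuousOn)
  set D : ℝ := max D0 0 with hD
  have hDnn : 0 ≤ D := le_max_right _ _
  set ε : ℝ := r / C with hε
  have hεpos : 0 < ε := div_pos hr hC
  set c : ℝ := M * C + D / ε + 1 with hc
  have hMC : 0 < M * C := mul_pos hM1 hC
  have hDε : 0 ≤ D / ε := div_nonneg hDnn hεpos.le
  have hcpos : 0 < c := by rw [hc]; linarith
  refine ⟨c, hcpos, fun x hxK => ?_⟩
  set y : E := Hx x with hy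
  set φ : ℝ := ∑ k, |(inner ℝ y (v k) : ℝ)| with hφ
  have hφnn : 0 ≤ φ := Finset.sum_nonneg fun k _ => abs_nonneg _
  have hsum : ∑ k, |(inner ℝ e (mv (J k) (Hx x)) : ℝ)| = φ := by
    rw [hφ]
    exact Finset.sum_congr rfl fun k _ => habs k y
  have heqpart : c * ∑ k, |(inner ℝ e (mv (J k) (Hx x)) : ℝ)|
      = c * ∑ k, |(inner ℝ (Hx x) (mv (J k) e) : ℝ)| := by
    have h : (∑ k, |(inner ℝ e (mv (J k) (Hx x)) : ℝ)|)
        = ∑ k, |(inner ℝ (Hx x) (mv (J k) e) : ℝ)| :=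
      Finset.sum_congr rfl fun k _ => habs k (Hx x)
    rw [h]
  refine ⟨?_, heqpart⟩
  rw [hsum]
  have hxX : x ∈ X := hKX hxK
  have hyK1 : y ∈ Hx '' K := mem_image_of_mem _ hxK
  by_cases hcase : φ ≤ ε
  · -- projection argument
    have hVsclosed : IsClosed (Vs : Set E) := Vs.closed_of_finiteDimensional
    have hVsne : (Vs : Set E).Nonempty := ⟨0, Vs.zero_mem⟩
    obtain ⟨z, hzVs, hzd⟩ := hVsclosed.exists_infDist_eq_dist hVsne y
    have hdistz : dist y z ≤ C * φ := by
      rw [← hzd]; exact hCbound y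
    have hdistr : dist y z ≤ r := by
      calc dist y z ≤ C * φ := hdistz
        _ ≤ C * ε := mul_le_mul_of_nonneg_left hcase hC.le
        _ = r := by rw [hε]; field_simp
    have hzball : z ∈ closedBall y r := by
      rw [mem_closedBall, dist_comm]; exact hdistr
    have hballsub : closedBall y r ⊆ cthickening r (Hx '' K) :=
      closedBall_subset_cthickening hyK1 r
    have hzY : z ∈ Hx '' X := hrsub (hballsub hzball)
    -- Hinv z belongs to T
    have hHinvzT : Hinv z ∈ T := by
      rw [hT]
      refine ⟨hHinvmaps z hzY, fun k => ?_⟩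
      rw [hright z hzY, hbracket k z]
      have := (mem_span_orthogonal_iff v z).mp hzVs k
      simp only [neg_eq_zero]; exact this
    -- Lipschitz estimate via MVT on the ball
    have hdiff : DifferentiableOn ℝ Hinv (Hx '' X) := hHinvC1.differentiableOn one_ne_zero
    have hder : ∀ w ∈ closedBall y r,
        HasFDerivWithinAt Hinv (fderiv ℝ Hinv w) (closedBall y r) w := by
      intro w hw
      have hwY : w ∈ Hx '' X := hrsub (hballsub hw)
      exact ((hdiff.differentiableAt (hYopen.mem_nhds hwY)).hasFDerivAt).hasFDerivWithinAt
    have hbnd : ∀ w ∈ closedBall y r, ‖fderiv ℝ Hinv w‖ ≤ M := by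
      intro w hw
      exact le_trans (hM0 w (hballsub hw)) (le_max_left _ _)
    have hMVT : ‖Hinv z - Hinv y‖ ≤ M * ‖z - y‖ :=
      (convex_closedBall y r).norm_image_sub_le_of_norm_hasFDerivWithin_le
        hder hbnd (mem_closedBall_self hr.le) hzball
    have hxHinv : Hinv y = x := hHinvleft x hxX
    calc infDist x T ≤ dist x (Hinv z) := infDist_le_dist_of_mem hHinvzT
      _ = ‖Hinv z - Hinv y‖ := by rw [hxHinv, dist_eq_norm, norm_sub_rev]
      _ ≤ M * ‖z - y‖ := hMVT
      _ = M * dist y z := by rw [dist_comm y z, dist_eq_norm]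
      _ ≤ M * (C * φ) := mul_le_mul_of_nonneg_left hdistz hM1.le
      _ ≤ c * φ := by
          rw [← mul_assoc]
          apply mul_le_mul_of_nonneg_right _ hφnn
          rw [hc]; linarith
  · -- fallback: crude bound
    push_neg at hcase
    have h1 : infDist x T ≤ D := by
      have := hD0 x hxK
      rw [Real.norm_eq_abs] at this
      calc infDist x T ≤ |infDist x T| := le_abs_self _
        _ ≤ D0 := this
        _ ≤ D := le_max_left _ _
    calc infDist x T ≤ D := h1
      _ = (D / ε) * ε := by field_simp
      _ ≤ (D / ε) * φ := mul_le_mul_of_nonneg_left hcase.le hDε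
      _ ≤ c * φ := by
          apply mul_le_mul_of_nonneg_right _ hφnn
          rw [hc]; linarith
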